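/- Expansion property for the Danos–Regnier switching: if S is a proof-structure that has exactly two terminal nodes C(A₁,…,Aₙ) and C*(~A₁,…,~Aₙ), where A₁,…,Aₙ are atoms, consisting of a C-link, a C*-link and, for each i, an atomic axiom link joining A_i and ~A_i, then S is correct in the sense of the Danos–Regnier switching. -/

import Mathlib

/-! ## Partitions of `{1,…,n}`, meeting graphs, orthogonality (Danos–Regnier) -/

/-- A partition of `{1,…,n}`, represented as a `Finpartition` of `Fin n`. -/
abbrev FinPartition (n : ℕ) := Finpartition (Finset.univ : Finset (Fin n))

/-- The (simple graph underlying the) meeting graph `G(p,q)` of two partitions of `{1,…,n}`: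
its vertices are the classes of `p` together with the classes of `q`, and a class of `p` is
adjacent to a class of `q` iff some `i ∈ {1,…,n}` belongs to both (in the meeting multigraph
there is one edge for each such `i`). -/
def meetingGraph {n : ℕ} (p q : FinPartition n) :
    SimpleGraph ({c // c ∈ p.parts} ⊕ {d // d ∈ q.parts}) :=
  SimpleGraph.fromRel fun a b =>
    ∃ (c : {c // c ∈ p.parts}) (d : {d // d ∈ q.parts}),
      ((c : Finset (Fin n)) ∩ (d : Finset (Fin n))).Nonempty ∧
      a = Sum.inl c ∧ b = Sum.inr d

/-- `p ⊥ q` : the meeting multigraph `G(p,q)` is connected and acyclic.  The meeting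
multigraph has exactly `n` edges (one per element of `{1,…,n}`), and a connected multigraph
is acyclic iff its number of edges is exactly one less than its number of vertices; so
`G(p,q)` is connected and acyclic iff it is connected (equivalently, the underlying simple
graph is connected) and `n + 1 = (#classes of p) + (#classes of q)`. -/
def Finpartition.Orthogonal {n : ℕ} (p q : FinPartition n) : Prop :=
  (meetingGraph p q).Connected ∧ n + 1 = p.parts.card + q.parts.card

/-- Orthogonality of two partition sets: `P ⊥ Q` iff `p ⊥ q` for all `p ∈ P`, `q ∈ Q`. -/
def orthSet {n : ℕ} (P Q : Set (FinPartition n)) : Prop :=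
  ∀ p ∈ P, ∀ q ∈ Q, p.Orthogonal q

/-- `P^⊥`, the maximal partition set orthogonal to `P`. -/
def orthCompl {n : ℕ} (P : Set (FinPartition n)) : Set (FinPartition n) :=
  {q | ∀ p ∈ P, p.Orthogonal q}

/-- The partition set of `⊗ⁿ` : the single partition of `{1,…,n}` into singleton classes. -/
def IsTensorSet {n : ℕ} (R : Set (FinPartition n)) : Prop :=
  R = {p : FinPartition n | ∀ c ∈ p.parts, c.card = 1}

/-- The partition set of `⅋ⁿ` : the single partition of `{1,…,n}` with one class. -/
def IsParSet {n : ℕ} (R : Set (FinPartition n)) : Prop :=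
  R = {p : FinPartition n | p.parts = {Finset.univ}}

/-! ## Generalized multiplicative connectives and the sequent calculus `MLL(Cᵢ)` -/

/-- An `n`-ary generalized (multiplicative) connective `C` together with its dual `C*`:
a pair of nonempty finite partition sets of `{1,…,n}` with `(P_C)^⊥ = P_{C*}` and
`(P_{C*})^⊥ = P_C`.  `rules` is the partition set of the introduction (right) rules of
`C`, and `dualRules` the one of its dual `C*`. -/
structure GenConn : Type where
  arity : ℕ
  rules : Set (FinPartition arity)
  dualRules : Set (FinPartition arity)
  rules_nonempty : rules.Nonempty
  rules_finite : rules.Finite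
  dualRules_nonempty : dualRules.Nonempty
  dualRules_finite : dualRules.Finite
  orth : orthCompl rules = dualRules
  orth' : orthCompl dualRules = rules

/-- Formulas of `MLL(Cᵢ)`: built from atoms `P` and their duals `~P` by `⊗`, `⅋` and the
generalized connectives `Cᵢ` (with constructor `conn i`) and their duals `Cᵢ*` (with
constructor `dconn i`), where `i` ranges over a signature `I` and `Csig i` records the
arity and the partition sets of `Cᵢ`. -/
inductive Formula (I : Type) (Csig : I → GenConn) : Type
  | pos : ℕ → Formula I Csig
  | neg : ℕ → Formula I Csig
  | tens : Formula I Csig → Formula I Csig → Formula I Csig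
  | parr : Formula I Csig → Formula I Csig → Formula I Csig
  | conn : (i : I) → (Fin (Csig i).arity → Formula I Csig) → Formula I Csig
  | dconn : (i : I) → (Fin (Csig i).arity → Formula I Csig) → Formula I Csig

/-- The dual `~A` of a formula, extended by De Morgan and
`~(Cᵢ(A₁,…,Aₘ)) = Cᵢ*(~A₁,…,~Aₘ)`. -/
def Formula.dual {I : Type} {Csig : I → GenConn} : Formula I Csig → Formula I Csig
  | .pos m => .neg m
  | .neg m => .pos m
  | .tens A B => .parr A.dual B.dual
  | .parr A B => .tens A.dual B.dual
  | .conn i A => .dconn i fun k => (A k).dual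
  | .dconn i A => .conn i fun k => (A k).dual

/-- Provability in the one-sided sequent calculus `MLL(Cᵢ)` (sequents are multisets of
formulas).  The rules are the axiom `⊢ P, ~P` for atomic `P`, the cut rule (allowed only
when `cutEnabled = true`), the `⊗`- and `⅋`-rules of MLL, and, for each generalized
connective `Cᵢ` and each partition `p ∈ P_{Cᵢ}` with classes `c`, the introduction rule
with premises `⊢ Γ_c, A_{c₁},…,A_{cₘ}` (one for each class `c` of `p`) and conclusion
`⊢ Γ₁,…,Γ_k, Cᵢ(A₁,…,Aₘ)`; dually for `Cᵢ*` using `p ∈ P_{Cᵢ*}`. -/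
inductive Provable {I : Type} {Csig : I → GenConn} (cutEnabled : Bool) :
    Multiset (Formula I Csig) → Prop
  | ax (m : ℕ) : Provable cutEnabled {Formula.pos m, Formula.neg m}
  | cut (A : Formula I Csig) (Γ Δ : Multiset (Formula I Csig)) (hcut : cutEnabled = true) :
      Provable cutEnabled (A ::ₘ Γ) → Provable cutEnabled (A.dual ::ₘ Δ) →
      Provable cutEnabled (Γ + Δ)
  | tens (A B : Formula I Csig) (Γ Δ : Multiset (Formula I Csig)) :
      Provable cutEnabled (A ::ₘ Γ) → Provable cutEnabled (B ::ₘ Δ) →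
      Provable cutEnabled (Formula.tens A B ::ₘ (Γ + Δ))
  | parr (A B : Formula I Csig) (Γ : Multiset (Formula I Csig)) :
      Provable cutEnabled (A ::ₘ B ::ₘ Γ) →
      Provable cutEnabled (Formula.parr A B ::ₘ Γ)
  | conn (i : I) (A : Fin (Csig i).arity → Formula I Csig)
      (p : FinPartition (Csig i).arity) (hp : p ∈ (Csig i).rules)
      (Γ : {c // c ∈ p.parts} → Multiset (Formula I Csig)) :
      (∀ c : {c // c ∈ p.parts},
        Provable cutEnabled (Γ c + Multiset.map A (c : Finset (Fin (Csig i).arity)).val)) →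
      Provable cutEnabled (Formula.conn i A ::ₘ ∑ c : {c // c ∈ p.parts}, Γ c)
  | dconn (i : I) (A : Fin (Csig i).arity → Formula I Csig)
      (p : FinPartition (Csig i).arity) (hp : p ∈ (Csig i).dualRules)
      (Γ : {c // c ∈ p.parts} → Multiset (Formula I Csig)) :
      (∀ c : {c // c ∈ p.parts},
        Provable cutEnabled (Γ c + Multiset.map A (c : Finset (Fin (Csig i).arity)).val)) →
      Provable cutEnabled (Formula.dconn i A ::ₘ ∑ c : {c // c ∈ p.parts}, Γ c)

/-! ## Proof structures for `MLL(Cᵢ)` -/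

/-- The kinds of links of a proof-structure for `MLL(Cᵢ)`: axiom links, cut links,
`⊗`-links, `⅋`-links, `Cᵢ`-links and `Cᵢ*`-links. -/
inductive LinkKind (I : Type) : Type
  | ax : LinkKind I
  | cut : LinkKind I
  | tens : LinkKind I
  | parr : LinkKind I
  | conn : I → LinkKind I
  | dconn : I → LinkKind I

/-- The raw data of a proof-structure: a graph whose nodes are labelled by formulas and
whose edges are organized into links; each link has a kind, an (ordered) list of premise
nodes and a list of conclusion nodes. -/
structure PrePS (I : Type) (Csig : I → GenConn) : Type 1 where
  Node : Type
  label : Node → Formula I Csig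
  Link : Type
  kind : Link → LinkKind I
  prem : Link → List Node
  concl : Link → List Node

/-- A proof-structure for `MLL(Cᵢ)`: a nonempty finite graph of formula-labelled nodes
organized into axiom links (two conclusions `A` and `~A`, no premises), cut links (two
premises `A` and `~A`, no conclusion), `⊗`- and `⅋`-links, and `C`-links (premises
`A₁,…,Aₘ`, conclusion `Cᵢ(A₁,…,Aₘ)`, resp. `Cᵢ*(A₁,…,Aₘ)`), such that each node is the
premise of at most one link and the conclusion of exactly one link. -/
structure ProofStructure (I : Type) (Csig : I → GenConn) : Type 1 where
  pre : PrePS I Csig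
  node_finite : Finite pre.Node
  node_nonempty : Nonempty pre.Node
  link_finite : Finite pre.Link
  wf_ax : ∀ l, pre.kind l = .ax → pre.prem l = [] ∧
      ∃ a b, pre.concl l = [a, b] ∧ pre.label b = (pre.label a).dual
  wf_cut : ∀ l, pre.kind l = .cut → pre.concl l = [] ∧
      ∃ a b, pre.prem l = [a, b] ∧ pre.label b = (pre.label a).dual
  wf_tens : ∀ l, pre.kind l = .tens → ∃ a b c, pre.prem l = [a, b] ∧ pre.concl l = [c] ∧
      pre.label c = .tens (pre.label a) (pre.label b)
  wf_parr : ∀ l, pre.kind l = .parr → ∃ a b c, pre.prem l = [a, b] ∧ pre.concl l = [c] ∧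
      pre.label c = .parr (pre.label a) (pre.label b)
  wf_conn : ∀ l i, pre.kind l = .conn i →
      ∃ (args : Fin (Csig i).arity → pre.Node) (c : pre.Node),
        pre.prem l = List.ofFn args ∧ pre.concl l = [c] ∧
        pre.label c = .conn i fun k => pre.label (args k)
  wf_dconn : ∀ l i, pre.kind l = .dconn i →
      ∃ (args : Fin (Csig i).arity → pre.Node) (c : pre.Node),
        pre.prem l = List.ofFn args ∧ pre.concl l = [c] ∧
        pre.label c = .dconn i fun k => pre.label (args k)
  prem_nodup : ∀ l, (pre.prem l).Nodup
  concl_nodup : ∀ l, (pre.concl l).Nodup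
  concl_unique : ∀ v : pre.Node, ∃! l, v ∈ pre.concl l
  prem_unique : ∀ (v : pre.Node) (l l' : pre.Link),
      v ∈ pre.prem l → v ∈ pre.prem l' → l = l'

namespace PrePS

variable {I : Type} {Csig : I → GenConn}

/-- A node is terminal if it is the premise of no link. -/
def Terminal (S : PrePS I Csig) (v : S.Node) : Prop := ∀ l, v ∉ S.prem l

/-- A link is terminal if all its conclusions are terminal nodes. -/
def TerminalLink (S : PrePS I Csig) (l : S.Link) : Prop :=
  ∀ v ∈ S.concl l, S.Terminal v

/-- The full graph of a proof-structure: the two conclusions of an axiom link are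
adjacent, the two premises of a cut link are adjacent, and each premise of a link is
adjacent to each of its conclusions. -/
def fullGraph (S : PrePS I Csig) : SimpleGraph S.Node :=
  SimpleGraph.fromRel fun a b =>
    (∃ l, S.kind l = .ax ∧ S.concl l = [a, b]) ∨
    (∃ l, S.kind l = .cut ∧ S.prem l = [a, b]) ∨
    (∃ l, a ∈ S.prem l ∧ b ∈ S.concl l)

/-- A terminal link is splitting if removing its (conclusion) node and the incident
edges separates the proof-structure into disjoint sub-proof-structures, i.e. the induced
graph on the remaining nodes is disconnected. -/
def Splitting (S : PrePS I Csig) (l : S.Link) : Prop :=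
  ¬ (S.fullGraph.induce {v : S.Node | v ∉ S.concl l}).Connected

/-- A `⅋ᵏ`-link: a binary `⅋`-link, or a (dual) generalized-connective link whose
partition set is the one of `⅋ᵏ`. -/
def IsParLikeLink (S : PrePS I Csig) (l : S.Link) : Prop :=
  S.kind l = .parr ∨
  (∃ i, S.kind l = .conn i ∧ IsParSet (Csig i).rules) ∨
  (∃ i, S.kind l = .dconn i ∧ IsParSet (Csig i).dualRules)

/-- A `C`-link (in the wide sense used for splitting): a `⊗`-link or a
generalized-connective link, which is not a `⅋ᵏ`-link. -/
def IsCLink (S : PrePS I Csig) (l : S.Link) : Prop :=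
  (S.kind l = .tens ∨ (∃ i, S.kind l = .conn i) ∨ (∃ i, S.kind l = .dconn i)) ∧
  ¬ S.IsParLikeLink l

/-- The correctness graph determined by a selection `sel` of premise positions for each
link: the two conclusions of an axiom link are adjacent, the two premises of a cut link
are adjacent, and the `k`-th premise of a link is adjacent to its conclusion exactly when
`k ∈ sel l`. -/
def selGraph (S : PrePS I Csig) (sel : S.Link → Finset ℕ) : SimpleGraph S.Node :=
  SimpleGraph.fromRel fun a b =>
    (∃ l, S.kind l = .ax ∧ S.concl l = [a, b]) ∨
    (∃ l, S.kind l = .cut ∧ S.prem l = [a, b]) ∨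
    (∃ l, ∃ k ∈ sel l, (S.prem l)[k]? = some a ∧ b ∈ S.concl l)

end PrePS

/-- A transversal of a partition `p`: a set containing exactly one element of each class
of `p`. -/
def IsTransversal {m : ℕ} (p : FinPartition m) (t : Finset (Fin m)) : Prop :=
  ∀ c ∈ p.parts, ∃! x, x ∈ t ∧ x ∈ c

/-- A **partition switching** of a proof-structure: for each generalized-connective link
it selects a partition `p` in the corresponding partition set together with exactly one
element of each class of `p` (the premise edges to the selected elements are kept, all
other premise edges of the link are deleted).  On a `⊗`-link both premise edges are kept
(the transversal of `{(1),(2)}`), on a `⅋`-link exactly one premise edge is kept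
(a transversal of `{(1,2)}`). -/
structure PartitionSwitching {I : Type} {Csig : I → GenConn} (S : PrePS I Csig) where
  sel : S.Link → Finset ℕ
  valid_tens : ∀ l, S.kind l = .tens → sel l = {0, 1}
  valid_parr : ∀ l, S.kind l = .parr → sel l = {0} ∨ sel l = {1}
  valid_conn : ∀ l i, S.kind l = .conn i → ∃ p ∈ (Csig i).rules,
      ∃ t : Finset (Fin (Csig i).arity), IsTransversal p t ∧ sel l = t.image Fin.val
  valid_dconn : ∀ l i, S.kind l = .dconn i → ∃ p ∈ (Csig i).dualRules,
      ∃ t : Finset (Fin (Csig i).arity), IsTransversal p t ∧ sel l = t.image Fin.val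
  valid_other : ∀ l, S.kind l = .ax ∨ S.kind l = .cut → sel l = ∅

/-- A proof-structure is a **proof-net in the sense of the partition switching** iff for
every partition switching the associated correctness graph is connected and acyclic. -/
def PrePS.PartitionProofNet {I : Type} {Csig : I → GenConn} (S : PrePS I Csig) : Prop :=
  ∀ sw : PartitionSwitching S,
    (S.selGraph sw.sel).Connected ∧ (S.selGraph sw.sel).IsAcyclic

/-! ## The Danos–Regnier switching for generalized connectives -/

/-- The partition set of a partition of `Fin m`, re-encoded as a set of sets of premise
positions. -/
def partsToNat {m : ℕ} (p : FinPartition m) : Finset (Finset ℕ) :=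
  p.parts.image fun c => c.image Fin.val

/-- A **Danos–Regnier switching** of a proof-structure: for each generalized-connective
link it selects a partition `p` in the corresponding partition set together with one
class of `p`.  (Binary `⊗`-links carry the partition `{(1),(2)}` and `⅋`-links the
partition `{(1,2)}`.) -/
structure DRSwitching {I : Type} {Csig : I → GenConn} (S : PrePS I Csig) where
  part : S.Link → Finset (Finset ℕ)
  selClass : S.Link → Finset ℕ
  sel_mem : ∀ l, (S.kind l = .tens ∨ S.kind l = .parr ∨
      (∃ i, S.kind l = .conn i) ∨ (∃ i, S.kind l = .dconn i)) → selClass l ∈ part l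
  valid_tens : ∀ l, S.kind l = .tens → part l = {{0}, {1}}
  valid_parr : ∀ l, S.kind l = .parr → part l = {({0, 1} : Finset ℕ)}
  valid_conn : ∀ l i, S.kind l = .conn i → ∃ p ∈ (Csig i).rules, part l = partsToNat p
  valid_dconn : ∀ l i, S.kind l = .dconn i → ∃ p ∈ (Csig i).dualRules, part l = partsToNat p
  valid_other : ∀ l, S.kind l = .ax ∨ S.kind l = .cut → part l = ∅ ∧ selClass l = ∅

/-- The correctness graph of a Danos–Regnier switching: the two conclusions of an axiom
link are adjacent and the two premises of a cut link are adjacent; at each switched link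
the premises belonging to the same class of the chosen partition are connected to one
another (consecutive premises of a class are adjacent), and every edge from a class to
the node of the link is deleted except one edge from the selected class (the premise of
the selected class with least position is adjacent to the conclusion). -/
def PrePS.drGraph {I : Type} {Csig : I → GenConn} (S : PrePS I Csig)
    (sw : DRSwitching S) : SimpleGraph S.Node :=
  SimpleGraph.fromRel fun a b =>
    (∃ l, S.kind l = .ax ∧ S.concl l = [a, b]) ∨
    (∃ l, S.kind l = .cut ∧ S.prem l = [a, b]) ∨
    (∃ l, ∃ c ∈ sw.part l, ∃ j ∈ c, ∃ k ∈ c, j < k ∧ (∀ x ∈ c, ¬ (j < x ∧ x < k)) ∧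
      (S.prem l)[j]? = some a ∧ (S.prem l)[k]? = some b) ∨
    (∃ l j, (∃ h : (sw.selClass l).Nonempty, j = (sw.selClass l).min' h) ∧
      (S.prem l)[j]? = some a ∧ b ∈ S.concl l)

/-- A proof-structure is **correct in the sense of the Danos–Regnier switching** iff for
every Danos–Regnier switching the associated correctness graph is connected and
acyclic. -/
def PrePS.DRProofNet {I : Type} {Csig : I → GenConn} (S : PrePS I Csig) : Prop :=
  ∀ sw : DRSwitching S, (S.drGraph sw).Connected ∧ (S.drGraph sw).IsAcyclic

/-- `S` is (isomorphic to) the proof-structure with exactly two terminal nodes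
`Cᵢ(A₁,…,Aₙ)` and `Cᵢ*(~A₁,…,~Aₙ)`, where `A₁,…,Aₙ` are the atoms `a 1, …, a n`,
consisting of a `Cᵢ`-link, a `Cᵢ*`-link, and, for each `k`, an atomic axiom link joining
`A_k` and `~A_k`. -/
def IsExpansionPS {I : Type} {Csig : I → GenConn} (i : I) (a : Fin (Csig i).arity → ℕ)
    (S : PrePS I Csig) : Prop :=
  ∃ (eN : S.Node ≃ (Fin (Csig i).arity ⊕ Fin (Csig i).arity) ⊕ Bool)
    (eL : S.Link ≃ Fin (Csig i).arity ⊕ Bool),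
    (∀ k, S.label (eN.symm (.inl (.inl k))) = .pos (a k)) ∧
    (∀ k, S.label (eN.symm (.inl (.inr k))) = .neg (a k)) ∧
    S.label (eN.symm (.inr true)) = .conn i (fun k => .pos (a k)) ∧
    S.label (eN.symm (.inr false)) = .dconn i (fun k => .neg (a k)) ∧
    (∀ k, S.kind (eL.symm (.inl k)) = .ax ∧
      S.prem (eL.symm (.inl k)) = [] ∧
      S.concl (eL.symm (.inl k)) = [eN.symm (.inl (.inl k)), eN.symm (.inl (.inr k))]) ∧
    S.kind (eL.symm (.inr true)) = .conn i ∧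
    S.prem (eL.symm (.inr true)) = List.ofFn (fun k => eN.symm (.inl (.inl k))) ∧
    S.concl (eL.symm (.inr true)) = [eN.symm (.inr true)] ∧
    S.kind (eL.symm (.inr false)) = .dconn i ∧
    S.prem (eL.symm (.inr false)) = List.ofFn (fun k => eN.symm (.inl (.inr k))) ∧
    S.concl (eL.symm (.inr false)) = [eN.symm (.inr false)]


open Finset in
/-- `j` and `k` are consecutive elements of `c`. -/
def ConsecNat (c : Finset ℕ) (j k : ℕ) : Prop :=
  j ∈ c ∧ k ∈ c ∧ j < k ∧ ∀ x ∈ c, ¬(j < x ∧ x < k)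

lemma exists_consec_pred (c : Finset ℕ) {k : ℕ} (hk : k ∈ c) (h : ∃ j ∈ c, j < k) :
    ∃ j, ConsecNat c j k := by
  classical
  obtain ⟨j0, hj0c, hj0⟩ := h
  set s := c.filter (· < k) with hs
  have hsne : s.Nonempty := ⟨j0, by simp [hs, hj0c, hj0]⟩
  refine ⟨s.max' hsne, ?_, hk, ?_, ?_⟩
  · have := s.max'_mem hsne
    simp only [hs, Finset.mem_filter] at this
    exact this.1
  · have := s.max'_mem hsne
    simp only [hs, Finset.mem_filter] at this
    exact this.2
  · rintro x hx ⟨h1, h2⟩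
    have hxs : x ∈ s := by simp [hs, hx, h2]
    exact absurd (Finset.le_max' s x hxs) (not_le_of_gt h1)

lemma chain_reach {V : Type*} (G : SimpleGraph V) (f : ℕ → V) (c : Finset ℕ)
    (hadj : ∀ j k, ConsecNat c j k → G.Adj (f j) (f k)) :
    ∀ x ∈ c, ∀ y ∈ c, G.Reachable (f x) (f y) := by
  suffices H : ∀ x (hx : x ∈ c), G.Reachable (f x) (f (c.min' ⟨x, hx⟩)) by
    intro x hx y hy
    exact (H x hx).trans (H y hy).symm
  intro x
  induction x using Nat.strong_induction_on with
  | _ x IH =>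
    intro hx
    by_cases hxm : x = c.min' ⟨x, hx⟩
    · rw [← hxm]
    · have hmin : c.min' ⟨x, hx⟩ < x :=
        lt_of_le_of_ne (Finset.min'_le c x hx) (Ne.symm hxm)
      obtain ⟨j, hcon⟩ := exists_consec_pred c hx ⟨c.min' ⟨x, hx⟩, c.min'_mem _, hmin⟩
      exact ((hadj j x hcon).symm.reachable).trans (IH j hcon.2.2.1 hcon.1)

open scoped Classical in
/-- The finset of consecutive pairs of a finset of naturals. -/
noncomputable def CPpairs (c : Finset ℕ) : Finset (ℕ × ℕ) :=
  (c ×ˢ c).filter fun jk => ConsecNat c jk.1 jk.2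

lemma mem_CPpairs {c : Finset ℕ} {jk : ℕ × ℕ} : jk ∈ CPpairs c ↔ ConsecNat c jk.1 jk.2 := by
  classical
  simp only [CPpairs, Finset.mem_filter, Finset.mem_product]
  exact ⟨fun h => h.2, fun h => ⟨⟨h.1, h.2.1⟩, h⟩⟩

lemma consec_unique {c : Finset ℕ} {j j' k : ℕ} (h : ConsecNat c j k) (h' : ConsecNat c j' k) :
    j = j' := by
  rcases lt_trichotomy j j' with hlt | he | hgt
  · exact (h.2.2.2 j' h'.1 ⟨hlt, h'.2.2.1⟩).elim
  · exact he
  · exact (h'.2.2.2 j h.1 ⟨hgt, h.2.2.1⟩).elim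

lemma card_CPpairs (c : Finset ℕ) (h : c.Nonempty) : (CPpairs c).card = c.card - 1 := by
  classical
  have : (CPpairs c).card = (c.erase (c.min' h)).card := by
    refine Finset.card_bij (fun jk _ => jk.2) ?_ ?_ ?_
    · rintro ⟨j, k⟩ hjk
      rw [mem_CPpairs] at hjk
      refine Finset.mem_erase.2 ⟨?_, hjk.2.1⟩
      intro hkm
      exact absurd (hkm ▸ hjk.2.2.1) (not_lt_of_ge (Finset.min'_le c j hjk.1))
    · rintro ⟨j, k⟩ hjk ⟨j', k'⟩ hjk' (he : k = k')
      rw [mem_CPpairs] at hjk hjk'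
      subst he
      exact Prod.ext (consec_unique hjk hjk') rfl
    · intro k hk
      rw [Finset.mem_erase] at hk
      have hmlt : c.min' h < k := lt_of_le_of_ne (Finset.min'_le c k hk.2) (Ne.symm hk.1)
      obtain ⟨j, hcon⟩ := exists_consec_pred c hk.2 ⟨c.min' h, c.min'_mem h, hmlt⟩
      exact ⟨⟨j, k⟩, mem_CPpairs.2 hcon, rfl⟩
  rw [this, Finset.card_erase_of_mem (c.min'_mem h)]

lemma bound_CPpairs {c : Finset ℕ} {m : ℕ} (hb : ∀ x ∈ c, x < m) {jk : ℕ × ℕ}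
    (h : jk ∈ CPpairs c) : jk.1 < m ∧ jk.2 < m := by
  rw [mem_CPpairs] at h
  exact ⟨hb _ h.1, hb _ h.2.1⟩

/-- Deleting an edge of a cycle keeps the graph connected. -/
lemma connected_delete_cycle_edge {V : Type*} {G : SimpleGraph V} (hc : G.Connected)
    {u : V} {w : G.Walk u u} (hcy : w.IsCycle) {e : Sym2 V} (he : e ∈ w.edges) :
    (G \ SimpleGraph.fromEdgeSet {e}).Connected := by
  induction e using Sym2.ind with
  | _ v v' =>
    have hR : (G \ SimpleGraph.fromEdgeSet {s(v, v')}).Reachable v v' :=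
      (SimpleGraph.adj_and_reachable_delete_edges_iff_exists_cycle.2 ⟨u, w, hcy, he⟩).2
    have hne : Nonempty V := hc.nonempty
    refine SimpleGraph.Connected.mk fun x y => ?_
    obtain ⟨p⟩ := hc.preconnected x y
    induction p with
    | nil => rfl
    | @cons a b c hab p ih =>
      refine SimpleGraph.Reachable.trans ?_ ih
      by_cases hedge : s(a, b) = s(v, v')
      · rw [Sym2.eq_iff] at hedge
        rcases hedge with ⟨rfl, rfl⟩ | ⟨rfl, rfl⟩
        · exact hR
        · exact hR.symm
      · refine SimpleGraph.Adj.reachable ?_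
        simp only [SimpleGraph.sdiff_adj, SimpleGraph.fromEdgeSet_adj, Set.mem_singleton_iff]
        exact ⟨hab, fun hx => hedge hx.1⟩

lemma connected_card_vert_le :
    ∀ (m : ℕ) {V : Type} [Fintype V] (G : SimpleGraph V) [DecidableRel G.Adj],
      G.edgeFinset.card = m → G.Connected → Fintype.card V ≤ m + 1 := by
  intro m
  induction m using Nat.strong_induction_on with
  | _ m IH =>
    intro V _ G _ hm hc
    classical
    by_cases ha : G.IsAcyclic
    · have ht : G.IsTree := ⟨hc, ha⟩
      have := ht.card_edgeFinset
      omega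
    · simp only [SimpleGraph.IsAcyclic, not_forall, not_not] at ha
      obtain ⟨u, w, hcy⟩ := ha
      have hlen : 0 < w.edges.length := by
        have := hcy.three_le_length
        simp only [SimpleGraph.Walk.length_edges]
        omega
      obtain ⟨e, he⟩ := List.exists_mem_of_length_pos hlen
      have heE : e ∈ G.edgeFinset := by
        rw [SimpleGraph.mem_edgeFinset]
        exact w.edges_subset_edgeSet he
      set G' := G \ SimpleGraph.fromEdgeSet {e} with hG'
      have hc' : G'.Connected := connected_delete_cycle_edge hc hcy he
      have hEs : G'.edgeSet = G.edgeSet \ {e} := by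
        simp [hG', SimpleGraph.edgeSet_sdiff, SimpleGraph.edgeSet_fromEdgeSet,
          SimpleGraph.edgeSet_sdiff_sdiff_isDiag]
      have hcard : ∀ inst : Fintype G'.edgeSet,
          (@SimpleGraph.edgeFinset V G' inst).card = m - 1 := by
        intro inst
        have h3 : @SimpleGraph.edgeFinset V G' inst = G.edgeFinset.erase e := by
          ext x
          rw [SimpleGraph.mem_edgeFinset, hEs]
          simp [Finset.mem_erase, and_comm]
        rw [h3, Finset.card_erase_of_mem heE, hm]
      have hmpos : 0 < m := by
        rw [← hm]
        exact Finset.card_pos.2 ⟨e, heE⟩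
      have h2 : m - 1 < m := by omega
      have := IH (m - 1) h2 (G := G') (hcard _) hc'
      omega

lemma isAcyclic_of_connected_card {V : Type} [Fintype V] (G : SimpleGraph V)
    [DecidableRel G.Adj] (hc : G.Connected) (hcard : G.edgeFinset.card + 1 = Fintype.card V) :
    G.IsAcyclic := by
  classical
  intro u w hcy
  have hlen : 0 < w.edges.length := by
    have := hcy.three_le_length
    simp only [SimpleGraph.Walk.length_edges]
    omega
  obtain ⟨e, he⟩ := List.exists_mem_of_length_pos hlen
  have heE : e ∈ G.edgeFinset := by
    rw [SimpleGraph.mem_edgeFinset]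
    exact w.edges_subset_edgeSet he
  set G' := G \ SimpleGraph.fromEdgeSet {e} with hG'
  have hc' : G'.Connected := connected_delete_cycle_edge hc hcy he
  have hEs : G'.edgeSet = G.edgeSet \ {e} := by
    simp [hG', SimpleGraph.edgeSet_sdiff, SimpleGraph.edgeSet_fromEdgeSet,
      SimpleGraph.edgeSet_sdiff_sdiff_isDiag]
  have hcard' : ∀ inst : Fintype G'.edgeSet,
      (@SimpleGraph.edgeFinset V G' inst).card = G.edgeFinset.card - 1 := by
    intro inst
    have h3 : @SimpleGraph.edgeFinset V G' inst = G.edgeFinset.erase e := by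
      ext x
      rw [SimpleGraph.mem_edgeFinset, hEs]
      simp [Finset.mem_erase, and_comm]
    rw [h3, Finset.card_erase_of_mem heE]
  have hpos : 0 < G.edgeFinset.card := Finset.card_pos.2 ⟨e, heE⟩
  have := connected_card_vert_le (G.edgeFinset.card - 1) (G := G') (hcard' _) hc'
  omega

/-! ### Auxiliary material for the expansion property -/

section Expansion

variable {n : ℕ} {V : Type}

/-- Positive atom node. -/
abbrev XP (e : V ≃ (Fin n ⊕ Fin n) ⊕ Bool) (k : Fin n) : V := e.symm (.inl (.inl k))
/-- Negative atom node. -/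
abbrev XN (e : V ≃ (Fin n ⊕ Fin n) ⊕ Bool) (k : Fin n) : V := e.symm (.inl (.inr k))
/-- The `C`-conclusion node. -/
abbrev XT (e : V ≃ (Fin n ⊕ Fin n) ⊕ Bool) : V := e.symm (.inr true)
/-- The `C*`-conclusion node. -/
abbrev XF (e : V ≃ (Fin n ⊕ Fin n) ⊕ Bool) : V := e.symm (.inr false)
/-- Positive atom node, indexed by `ℕ` (junk value `XT e` out of range). -/
noncomputable def XPn (e : V ≃ (Fin n ⊕ Fin n) ⊕ Bool) (x : ℕ) : V :=
  if h : x < n then XP e ⟨x, h⟩ else XT e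
/-- Negative atom node, indexed by `ℕ` (junk value `XT e` out of range). -/
noncomputable def XNn (e : V ≃ (Fin n ⊕ Fin n) ⊕ Bool) (x : ℕ) : V :=
  if h : x < n then XN e ⟨x, h⟩ else XT e

lemma XPn_lt (e : V ≃ (Fin n ⊕ Fin n) ⊕ Bool) {x : ℕ} (h : x < n) :
    XPn e x = XP e ⟨x, h⟩ := dif_pos h

lemma XNn_lt (e : V ≃ (Fin n ⊕ Fin n) ⊕ Bool) {x : ℕ} (h : x < n) :
    XNn e x = XN e ⟨x, h⟩ := dif_pos h

lemma XPn_coe (e : V ≃ (Fin n ⊕ Fin n) ⊕ Bool) (k : Fin n) : XPn e (k : ℕ) = XP e k := by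
  rw [XPn_lt e k.isLt]

lemma XNn_coe (e : V ≃ (Fin n ⊕ Fin n) ⊕ Bool) (k : Fin n) : XNn e (k : ℕ) = XN e k := by
  rw [XNn_lt e k.isLt]

/-- The abstract description of the edges of the Danos–Regnier correctness graph of the
expansion proof-structure. -/
def ExpRel (e : V ≃ (Fin n ⊕ Fin n) ⊕ Bool) (p q : FinPartition n) (jT jF : ℕ)
    (a b : V) : Prop :=
  (∃ k : Fin n, a = XP e k ∧ b = XN e k) ∨
  (∃ c ∈ partsToNat p, ∃ j k, ConsecNat c j k ∧ a = XPn e j ∧ b = XPn e k) ∨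
  (∃ c ∈ partsToNat q, ∃ j k, ConsecNat c j k ∧ a = XNn e j ∧ b = XNn e k) ∨
  (a = XPn e jT ∧ b = XT e) ∨
  (a = XNn e jF ∧ b = XF e)

lemma partsToNat_bound {r : FinPartition n} {c : Finset ℕ} (hc : c ∈ partsToNat r) :
    ∀ x ∈ c, x < n := by
  rw [partsToNat, Finset.mem_image] at hc
  obtain ⟨C, hC, rfl⟩ := hc
  intro x hx
  rw [Finset.mem_image] at hx
  obtain ⟨k, _, rfl⟩ := hx
  exact k.isLt

lemma partsToNat_nonempty {r : FinPartition n} {c : Finset ℕ} (hc : c ∈ partsToNat r) :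
    c.Nonempty := by
  rw [partsToNat, Finset.mem_image] at hc
  obtain ⟨C, hC, rfl⟩ := hc
  exact (r.nonempty_of_mem_parts hC).image _

lemma mem_partsToNat_of_mem {r : FinPartition n} {C : Finset (Fin n)} (hC : C ∈ r.parts) :
    C.image Fin.val ∈ partsToNat r :=
  Finset.mem_image_of_mem _ hC

lemma partsToNat_eq_of_mem {r : FinPartition n} {c c' : Finset ℕ}
    (hc : c ∈ partsToNat r) (hc' : c' ∈ partsToNat r) {x : ℕ}
    (hx : x ∈ c) (hx' : x ∈ c') : c = c' := by
  rw [partsToNat, Finset.mem_image] at hc hc'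
  obtain ⟨C, hC, rfl⟩ := hc
  obtain ⟨C', hC', rfl⟩ := hc'
  rw [Finset.mem_image] at hx hx'
  obtain ⟨y, hy, rfl⟩ := hx
  obtain ⟨y', hy', hyy⟩ := hx'
  have : y' = y := Fin.val_injective hyy
  subst this
  rw [r.eq_of_mem_parts hC hC' hy hy']

lemma exists_class_nat (r : FinPartition n) (k : Fin n) :
    ∃ c ∈ partsToNat r, (k : ℕ) ∈ c := by
  obtain ⟨C, hC, hk⟩ := r.exists_mem (Finset.mem_univ k)
  exact ⟨C.image Fin.val, mem_partsToNat_of_mem hC, Finset.mem_image_of_mem _ hk⟩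

lemma sum_pred_card (r : FinPartition n) :
    (∑ c ∈ partsToNat r, (c.card - 1)) + r.parts.card = n := by
  classical
  have himg : ∀ C ∈ r.parts, ∀ C' ∈ r.parts,
      C.image Fin.val = C'.image Fin.val → C = C' := fun C _ C' _ h =>
    Finset.image_injective Fin.val_injective h
  rw [partsToNat, Finset.sum_image himg]
  have h1 : ∀ C ∈ r.parts, (C.image Fin.val).card - 1 = C.card - 1 := by
    intro C _; rw [Finset.card_image_of_injective _ Fin.val_injective]
  rw [Finset.sum_congr rfl h1]
  have h3 : ∀ C ∈ r.parts, C.card - 1 + 1 = C.card := fun C hC =>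
    Nat.succ_pred_eq_of_pos (Finset.card_pos.2 (r.nonempty_of_mem_parts hC))
  calc (∑ C ∈ r.parts, (C.card - 1)) + r.parts.card
      = ∑ C ∈ r.parts, ((C.card - 1) + 1) := by
        rw [Finset.sum_add_distrib, Finset.sum_const, smul_eq_mul, mul_one]
    _ = ∑ C ∈ r.parts, C.card := Finset.sum_congr rfl h3
    _ = n := by rw [r.sum_card_parts]; simp

lemma expansion_correct (e : V ≃ (Fin n ⊕ Fin n) ⊕ Bool) (p q : FinPartition n)
    (horth : p.Orthogonal q) (jT jF : ℕ)
    (hjT : ∃ c ∈ partsToNat p, jT ∈ c) (hjF : ∃ c ∈ partsToNat q, jF ∈ c)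
    (G : SimpleGraph V)
    (hAdj : ∀ a b, G.Adj a b ↔ (ExpRel e p q jT jF a b ∨ ExpRel e p q jT jF b a)) :
    G.Connected ∧ G.IsAcyclic := by
  classical
  obtain ⟨cT, hcTmem, hjTc⟩ := hjT
  obtain ⟨cF, hcFmem, hjFc⟩ := hjF
  have hjTlt : jT < n := partsToNat_bound hcTmem jT hjTc
  have hjFlt : jF < n := partsToNat_bound hcFmem jF hjFc
  letI : Fintype V := Fintype.ofEquiv _ e.symm
  have hcardV : Fintype.card V = n + n + 2 := by
    rw [Fintype.card_congr e]
    simp [Fintype.card_sum]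
  have esimp : ∀ x y : (Fin n ⊕ Fin n) ⊕ Bool, (e.symm x = e.symm y) ↔ x = y :=
    fun x y => Equiv.apply_eq_iff_eq _
  -- basic adjacencies
  have hadjPN : ∀ k, G.Adj (XP e k) (XN e k) :=
    fun k => (hAdj _ _).2 (Or.inl (Or.inl ⟨k, rfl, rfl⟩))
  have hadjChainP : ∀ c ∈ partsToNat p, ∀ j k, ConsecNat c j k → G.Adj (XPn e j) (XPn e k) :=
    fun c hc j k hck => (hAdj _ _).2 (Or.inl (Or.inr (Or.inl ⟨c, hc, j, k, hck, rfl, rfl⟩)))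
  have hadjChainQ : ∀ c ∈ partsToNat q, ∀ j k, ConsecNat c j k → G.Adj (XNn e j) (XNn e k) :=
    fun c hc j k hck =>
      (hAdj _ _).2 (Or.inl (Or.inr (Or.inr (Or.inl ⟨c, hc, j, k, hck, rfl, rfl⟩))))
  have hadjT : G.Adj (XPn e jT) (XT e) :=
    (hAdj _ _).2 (Or.inl (Or.inr (Or.inr (Or.inr (Or.inl ⟨rfl, rfl⟩)))))
  have hadjF : G.Adj (XNn e jF) (XF e) :=
    (hAdj _ _).2 (Or.inl (Or.inr (Or.inr (Or.inr (Or.inr ⟨rfl, rfl⟩)))))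
  -- chain reachability inside classes
  have hchainP : ∀ c ∈ partsToNat p, ∀ x ∈ c, ∀ y ∈ c, G.Reachable (XPn e x) (XPn e y) :=
    fun c hc => chain_reach G (XPn e) c (fun j k h => hadjChainP c hc j k h)
  have hchainQ : ∀ c ∈ partsToNat q, ∀ x ∈ c, ∀ y ∈ c, G.Reachable (XNn e x) (XNn e y) :=
    fun c hc => chain_reach G (XNn e) c (fun j k h => hadjChainQ c hc j k h)
  have hclassP : ∀ C ∈ p.parts, ∀ x y : Fin n, x ∈ C → y ∈ C →
      G.Reachable (XP e x) (XP e y) := by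
    intro C hC x y hx hy
    have := hchainP (C.image Fin.val) (mem_partsToNat_of_mem hC)
      x (Finset.mem_image_of_mem _ hx) y (Finset.mem_image_of_mem _ hy)
    rwa [XPn_coe, XPn_coe] at this
  have hclassQ : ∀ C ∈ q.parts, ∀ x y : Fin n, x ∈ C → y ∈ C →
      G.Reachable (XN e x) (XN e y) := by
    intro C hC x y hx hy
    have := hchainQ (C.image Fin.val) (mem_partsToNat_of_mem hC)
      x (Finset.mem_image_of_mem _ hx) y (Finset.mem_image_of_mem _ hy)
    rwa [XNn_coe, XNn_coe] at this
  -- transfer connectivity along the meeting graph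
  let rep : ({c // c ∈ p.parts} ⊕ {d // d ∈ q.parts}) → V := fun mv =>
    match mv with
    | .inl c => XP e ((c : Finset (Fin n)).min' (p.nonempty_of_mem_parts c.2))
    | .inr d => XN e ((d : Finset (Fin n)).min' (q.nonempty_of_mem_parts d.2))
  have hstep : ∀ mv mw, (meetingGraph p q).Adj mv mw → G.Reachable (rep mv) (rep mw) := by
    have key : ∀ (c : {c // c ∈ p.parts}) (d : {d // d ∈ q.parts}),
        ((c : Finset (Fin n)) ∩ (d : Finset (Fin n))).Nonempty →
        G.Reachable (rep (.inl c)) (rep (.inr d)) := by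
      rintro c d ⟨x, hx⟩
      rw [Finset.mem_inter] at hx
      exact (hclassP _ c.2 _ x (Finset.min'_mem _ _) hx.1).trans
        ((hadjPN x).reachable.trans (hclassQ _ d.2 x _ hx.2 (Finset.min'_mem _ _)))
    intro mv mw h
    rw [meetingGraph, SimpleGraph.fromRel_adj] at h
    obtain ⟨hne, h | h⟩ := h
    · obtain ⟨c, d, hcd, h1, h2⟩ := h
      subst h1; subst h2
      exact key c d hcd
    · obtain ⟨c, d, hcd, h1, h2⟩ := h
      subst h1; subst h2
      exact (key c d hcd).symm
  have hwalkreach : ∀ mv mw, G.Reachable (rep mv) (rep mw) := by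
    intro mv mw
    obtain ⟨w⟩ := horth.1.preconnected mv mw
    induction w with
    | nil => exact SimpleGraph.Reachable.refl _
    | cons h w ih => exact (hstep _ _ h).trans ih
  -- from the class of jT we can reach the `C`-node
  obtain ⟨CT, hCT, hCTeq⟩ := Finset.mem_image.1 hcTmem
  obtain ⟨CF, hCF, hCFeq⟩ := Finset.mem_image.1 hcFmem
  obtain ⟨kT, hkT, hkTval⟩ := Finset.mem_image.1 (hCTeq ▸ hjTc)
  obtain ⟨kF, hkF, hkFval⟩ := Finset.mem_image.1 (hCFeq ▸ hjFc)
  have hXPT : XPn e jT = XP e kT := by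
    rw [← hkTval, XPn_coe]
  have hXNF : XNn e jF = XN e kF := by
    rw [← hkFval, XNn_coe]
  have hPT : ∀ x : Fin n, G.Reachable (XP e x) (XT e) := by
    intro x
    obtain ⟨C, hC, hxC⟩ := p.exists_mem (Finset.mem_univ x)
    have h1 : G.Reachable (XP e x) (rep (.inl ⟨C, hC⟩)) :=
      hclassP C hC x _ hxC (Finset.min'_mem _ _)
    have h2 := hwalkreach (.inl ⟨C, hC⟩) (.inl ⟨CT, hCT⟩)
    have h3 : G.Reachable (rep (.inl ⟨CT, hCT⟩)) (XP e kT) :=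
      hclassP CT hCT _ kT (Finset.min'_mem _ _) hkT
    exact h1.trans (h2.trans (h3.trans ((hXPT ▸ hadjT).reachable)))
  have hNT : ∀ x : Fin n, G.Reachable (XN e x) (XT e) :=
    fun x => (hadjPN x).reachable.symm.trans (hPT x)
  have hFT : G.Reachable (XF e) (XT e) :=
    (hXNF ▸ hadjF).reachable.symm.trans (hNT kF)
  have hallT : ∀ v, G.Reachable v (XT e) := by
    intro v
    have hv : v = e.symm (e v) := (e.symm_apply_apply v).symm
    rcases hev : e v with (k | k) | b
    · rw [hv, hev]; exact hPT k
    · rw [hv, hev]; exact hNT k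
    · cases b
      · rw [hv, hev]; exact hFT
      · rw [hv, hev]
  have hconn : G.Connected := by
    haveI : Nonempty V := ⟨XT e⟩
    exact ⟨fun u v => (hallT u).trans (hallT v).symm⟩
  refine ⟨hconn, ?_⟩
  -- now the counting argument
  set EA : Finset (Sym2 V) := Finset.univ.image (fun k : Fin n => s(XP e k, XN e k)) with hEAdef
  set EP : Finset (Sym2 V) := (partsToNat p).biUnion
    (fun c => (CPpairs c).image (fun jk => s(XPn e jk.1, XPn e jk.2))) with hEPdef
  set EQ : Finset (Sym2 V) := (partsToNat q).biUnion
    (fun c => (CPpairs c).image (fun jk => s(XNn e jk.1, XNn e jk.2))) with hEQdef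
  set ET : Finset (Sym2 V) := {s(XPn e jT, XT e)} with hETdef
  set EF : Finset (Sym2 V) := {s(XNn e jF, XF e)} with hEFdef
  -- shapes
  have hshapeEP : ∀ x ∈ EP, ∃ u v : Fin n, (u : ℕ) < (v : ℕ) ∧ x = s(XP e u, XP e v) := by
    intro x hx
    rw [hEPdef, Finset.mem_biUnion] at hx
    obtain ⟨c, hc, hx⟩ := hx
    rw [Finset.mem_image] at hx
    obtain ⟨⟨j, k⟩, hjk, rfl⟩ := hx
    have hb := bound_CPpairs (partsToNat_bound hc) hjk
    have hcon := mem_CPpairs.1 hjk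
    exact ⟨⟨j, hb.1⟩, ⟨k, hb.2⟩, hcon.2.2.1,
      by rw [XPn_lt e hb.1, XPn_lt e hb.2]⟩
  have hshapeEQ : ∀ x ∈ EQ, ∃ u v : Fin n, (u : ℕ) < (v : ℕ) ∧ x = s(XN e u, XN e v) := by
    intro x hx
    rw [hEQdef, Finset.mem_biUnion] at hx
    obtain ⟨c, hc, hx⟩ := hx
    rw [Finset.mem_image] at hx
    obtain ⟨⟨j, k⟩, hjk, rfl⟩ := hx
    have hb := bound_CPpairs (partsToNat_bound hc) hjk
    have hcon := mem_CPpairs.1 hjk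
    exact ⟨⟨j, hb.1⟩, ⟨k, hb.2⟩, hcon.2.2.1,
      by rw [XNn_lt e hb.1, XNn_lt e hb.2]⟩
  -- the edge set
  have hRmem : ∀ a b, ExpRel e p q jT jF a b → s(a, b) ∈ EA ∪ EP ∪ EQ ∪ ET ∪ EF := by
    intro a b h
    rcases h with ⟨k, rfl, rfl⟩ | ⟨c, hc, j, k, hck, rfl, rfl⟩ |
      ⟨c, hc, j, k, hck, rfl, rfl⟩ | ⟨rfl, rfl⟩ | ⟨rfl, rfl⟩
    · exact Finset.mem_union_left _ (Finset.mem_union_left _ (Finset.mem_union_left _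
        (Finset.mem_union_left _ (Finset.mem_image_of_mem _ (Finset.mem_univ k)))))
    · refine Finset.mem_union_left _ (Finset.mem_union_left _ (Finset.mem_union_left _
        (Finset.mem_union_right _ ?_)))
      rw [hEPdef, Finset.mem_biUnion]
      exact ⟨c, hc, Finset.mem_image_of_mem _ ((mem_CPpairs (jk := (j, k))).2 hck)⟩
    · refine Finset.mem_union_left _ (Finset.mem_union_left _ (Finset.mem_union_right _ ?_))
      rw [hEQdef, Finset.mem_biUnion]
      exact ⟨c, hc, Finset.mem_image_of_mem _ ((mem_CPpairs (jk := (j, k))).2 hck)⟩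
    · exact Finset.mem_union_left _ (Finset.mem_union_right _ (Finset.mem_singleton_self _))
    · exact Finset.mem_union_right _ (Finset.mem_singleton_self _)
  have hedge : G.edgeFinset = EA ∪ EP ∪ EQ ∪ ET ∪ EF := by
    refine Finset.Subset.antisymm ?_ ?_
    · intro x hx
      induction x with
      | _ a b =>
        rw [SimpleGraph.mem_edgeFinset, SimpleGraph.mem_edgeSet, hAdj] at hx
        rcases hx with h | h
        · exact hRmem a b h
        · rw [Sym2.eq_swap]
          exact hRmem b a h
    · intro x hx
      rw [SimpleGraph.mem_edgeFinset]
      rcases Finset.mem_union.1 hx with hx | hx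
      · rcases Finset.mem_union.1 hx with hx | hx
        · rcases Finset.mem_union.1 hx with hx | hx
          · rcases Finset.mem_union.1 hx with hx | hx
            · rw [hEAdef, Finset.mem_image] at hx
              obtain ⟨k, _, rfl⟩ := hx
              exact hadjPN k
            · rw [hEPdef, Finset.mem_biUnion] at hx
              obtain ⟨c, hc, hx⟩ := hx
              rw [Finset.mem_image] at hx
              obtain ⟨⟨j, k⟩, hjk, rfl⟩ := hx
              exact hadjChainP c hc j k (mem_CPpairs.1 hjk)
          · rw [hEQdef, Finset.mem_biUnion] at hx
            obtain ⟨c, hc, hx⟩ := hx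
            rw [Finset.mem_image] at hx
            obtain ⟨⟨j, k⟩, hjk, rfl⟩ := hx
            exact hadjChainQ c hc j k (mem_CPpairs.1 hjk)
        · rw [hETdef, Finset.mem_singleton] at hx
          subst hx
          exact hadjT
      · rw [hEFdef, Finset.mem_singleton] at hx
        subst hx
        exact hadjF
  -- cardinalities
  have hcardEA : EA.card = n := by
    rw [hEAdef, Finset.card_image_of_injective, Finset.card_univ, Fintype.card_fin]
    intro a b h
    rw [Sym2.eq_iff] at h
    rcases h with ⟨h1, _⟩ | ⟨h1, h2⟩
    · simpa [esimp] using h1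
    · exact absurd h1 (by simp [esimp])
  have hEPinj : ∀ (c : Finset ℕ), c ∈ partsToNat p → ∀ jk ∈ CPpairs c, ∀ jk' ∈ CPpairs c,
      s(XPn e jk.1, XPn e jk.2) = s(XPn e jk'.1, XPn e jk'.2) → jk = jk' := by
    rintro c hc ⟨j, k⟩ hjk ⟨j', k'⟩ hjk' h
    have hb := bound_CPpairs (partsToNat_bound hc) hjk
    have hb' := bound_CPpairs (partsToNat_bound hc) hjk'
    have hcon := mem_CPpairs.1 hjk
    have hcon' := mem_CPpairs.1 hjk'
    rw [XPn_lt e hb.1, XPn_lt e hb.2, XPn_lt e hb'.1, XPn_lt e hb'.2, Sym2.eq_iff] at h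
    rcases h with ⟨h1, h2⟩ | ⟨h1, h2⟩
    · simp only [esimp, Sum.inl.injEq, Fin.mk.injEq] at h1 h2
      simp [Prod.ext_iff, h1, h2]
    · exfalso
      simp only [esimp, Sum.inl.injEq, Fin.mk.injEq] at h1 h2
      have l1 := hcon.2.2.1
      have l2 := hcon'.2.2.1
      omega
  have hEQinj : ∀ (c : Finset ℕ), c ∈ partsToNat q → ∀ jk ∈ CPpairs c, ∀ jk' ∈ CPpairs c,
      s(XNn e jk.1, XNn e jk.2) = s(XNn e jk'.1, XNn e jk'.2) → jk = jk' := by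
    rintro c hc ⟨j, k⟩ hjk ⟨j', k'⟩ hjk' h
    have hb := bound_CPpairs (partsToNat_bound hc) hjk
    have hb' := bound_CPpairs (partsToNat_bound hc) hjk'
    have hcon := mem_CPpairs.1 hjk
    have hcon' := mem_CPpairs.1 hjk'
    rw [XNn_lt e hb.1, XNn_lt e hb.2, XNn_lt e hb'.1, XNn_lt e hb'.2, Sym2.eq_iff] at h
    rcases h with ⟨h1, h2⟩ | ⟨h1, h2⟩
    · simp only [esimp, Sum.inl.injEq, Sum.inr.injEq, Fin.mk.injEq] at h1 h2
      simp [Prod.ext_iff, h1, h2]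
    · exfalso
      simp only [esimp, Sum.inl.injEq, Sum.inr.injEq, Fin.mk.injEq] at h1 h2
      have l1 := hcon.2.2.1
      have l2 := hcon'.2.2.1
      omega
  have hcardEP : EP.card + p.parts.card = n := by
    rw [hEPdef, Finset.card_biUnion ?disj]
    case disj =>
      intro c hc c' hc' hne
      rw [Function.onFun, Finset.disjoint_left]
      rintro x hx hx'
      rw [Finset.mem_image] at hx hx'
      obtain ⟨⟨j, k⟩, hjk, rfl⟩ := hx
      obtain ⟨⟨j', k'⟩, hjk', heq⟩ := hx'
      have hb := bound_CPpairs (partsToNat_bound hc) hjk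
      have hb' := bound_CPpairs (partsToNat_bound hc') hjk'
      have hcon := mem_CPpairs.1 hjk
      have hcon' := mem_CPpairs.1 hjk'
      rw [XPn_lt e hb.1, XPn_lt e hb.2, XPn_lt e hb'.1, XPn_lt e hb'.2, Sym2.eq_iff] at heq
      rcases heq with ⟨h1, h2⟩ | ⟨h1, h2⟩ <;>
        simp only [esimp, Sum.inl.injEq, Fin.mk.injEq] at h1 h2
      · exact hne (partsToNat_eq_of_mem hc' hc (h1 ▸ hcon'.1) hcon.1).symm
      · exfalso
        have l1 := hcon.2.2.1
        have l2 := hcon'.2.2.1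
        omega
    have h1 : ∀ c ∈ partsToNat p,
        ((CPpairs c).image (fun jk => s(XPn e jk.1, XPn e jk.2))).card = c.card - 1 := by
      intro c hc
      rw [Finset.card_image_iff.2 (fun jk hjk jk' hjk' h => hEPinj c hc jk hjk jk' hjk' h),
        card_CPpairs c (partsToNat_nonempty hc)]
    rw [Finset.sum_congr rfl h1]
    exact sum_pred_card p
  have hcardEQ : EQ.card + q.parts.card = n := by
    rw [hEQdef, Finset.card_biUnion ?disj]
    case disj =>
      intro c hc c' hc' hne
      rw [Function.onFun, Finset.disjoint_left]
      rintro x hx hx'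
      rw [Finset.mem_image] at hx hx'
      obtain ⟨⟨j, k⟩, hjk, rfl⟩ := hx
      obtain ⟨⟨j', k'⟩, hjk', heq⟩ := hx'
      have hb := bound_CPpairs (partsToNat_bound hc) hjk
      have hb' := bound_CPpairs (partsToNat_bound hc') hjk'
      have hcon := mem_CPpairs.1 hjk
      have hcon' := mem_CPpairs.1 hjk'
      rw [XNn_lt e hb.1, XNn_lt e hb.2, XNn_lt e hb'.1, XNn_lt e hb'.2, Sym2.eq_iff] at heq
      rcases heq with ⟨h1, h2⟩ | ⟨h1, h2⟩ <;>
        simp only [esimp, Sum.inl.injEq, Sum.inr.injEq, Fin.mk.injEq] at h1 h2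
      · exact hne (partsToNat_eq_of_mem hc' hc (h1 ▸ hcon'.1) hcon.1).symm
      · exfalso
        have l1 := hcon.2.2.1
        have l2 := hcon'.2.2.1
        omega
    have h1 : ∀ c ∈ partsToNat q,
        ((CPpairs c).image (fun jk => s(XNn e jk.1, XNn e jk.2))).card = c.card - 1 := by
      intro c hc
      rw [Finset.card_image_iff.2 (fun jk hjk jk' hjk' h => hEQinj c hc jk hjk jk' hjk' h),
        card_CPpairs c (partsToNat_nonempty hc)]
    rw [Finset.sum_congr rfl h1]
    exact sum_pred_card q
  -- disjointness
  have hd1 : Disjoint EA EP := by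
    rw [Finset.disjoint_left]
    intro x hxA hxP
    rw [hEAdef, Finset.mem_image] at hxA
    obtain ⟨k, _, rfl⟩ := hxA
    obtain ⟨u, v, _, hx⟩ := hshapeEP _ hxP
    rw [Sym2.eq_iff] at hx
    rcases hx with ⟨h1, h2⟩ | ⟨h1, h2⟩ <;> simp [esimp] at h1 h2
  have hd2 : Disjoint (EA ∪ EP) EQ := by
    rw [Finset.disjoint_left]
    intro x hxAP hxQ
    obtain ⟨u, v, _, rfl⟩ := hshapeEQ _ hxQ
    rcases Finset.mem_union.1 hxAP with hx | hx
    · rw [hEAdef, Finset.mem_image] at hx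
      obtain ⟨k, _, hx⟩ := hx
      rw [Sym2.eq_iff] at hx
      rcases hx with ⟨h1, h2⟩ | ⟨h1, h2⟩ <;> simp [esimp] at h1 h2
    · obtain ⟨u', v', _, hx⟩ := hshapeEP _ hx
      rw [Sym2.eq_iff] at hx
      rcases hx with ⟨h1, h2⟩ | ⟨h1, h2⟩ <;> simp [esimp] at h1 h2
  have hd3 : Disjoint (EA ∪ EP ∪ EQ) ET := by
    rw [Finset.disjoint_right]
    intro x hxT hx
    rw [hETdef, Finset.mem_singleton] at hxT
    subst hxT
    rw [XPn_lt e hjTlt] at hx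
    rcases Finset.mem_union.1 hx with hx | hx
    · rcases Finset.mem_union.1 hx with hx | hx
      · rw [hEAdef, Finset.mem_image] at hx
        obtain ⟨k, _, hx⟩ := hx
        rw [Sym2.eq_iff] at hx
        rcases hx with ⟨h1, h2⟩ | ⟨h1, h2⟩ <;> simp [esimp] at h1 h2
      · obtain ⟨u', v', _, hx⟩ := hshapeEP _ hx
        rw [Sym2.eq_iff] at hx
        rcases hx with ⟨h1, h2⟩ | ⟨h1, h2⟩ <;> simp [esimp] at h1 h2
    · obtain ⟨u', v', _, hx⟩ := hshapeEQ _ hx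
      rw [Sym2.eq_iff] at hx
      rcases hx with ⟨h1, h2⟩ | ⟨h1, h2⟩ <;> simp [esimp] at h1 h2
  have hd4 : Disjoint (EA ∪ EP ∪ EQ ∪ ET) EF := by
    rw [Finset.disjoint_right]
    intro x hxF hx
    rw [hEFdef, Finset.mem_singleton] at hxF
    subst hxF
    rw [XNn_lt e hjFlt] at hx
    rcases Finset.mem_union.1 hx with hx | hx
    · rcases Finset.mem_union.1 hx with hx | hx
      · rcases Finset.mem_union.1 hx with hx | hx
        · rw [hEAdef, Finset.mem_image] at hx
          obtain ⟨k, _, hx⟩ := hx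
          rw [Sym2.eq_iff] at hx
          rcases hx with ⟨h1, h2⟩ | ⟨h1, h2⟩ <;> simp [esimp] at h1 h2
        · obtain ⟨u', v', _, hx⟩ := hshapeEP _ hx
          rw [Sym2.eq_iff] at hx
          rcases hx with ⟨h1, h2⟩ | ⟨h1, h2⟩ <;> simp [esimp] at h1 h2
      · obtain ⟨u', v', _, hx⟩ := hshapeEQ _ hx
        rw [Sym2.eq_iff] at hx
        rcases hx with ⟨h1, h2⟩ | ⟨h1, h2⟩ <;> simp [esimp] at h1 h2
    · rw [hETdef, Finset.mem_singleton, XPn_lt e hjTlt, Sym2.eq_iff] at hx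
      rcases hx with ⟨h1, h2⟩ | ⟨h1, h2⟩ <;> simp [esimp] at h1 h2
  -- final count
  have hcardE : G.edgeFinset.card + 1 = Fintype.card V := by
    rw [hedge, Finset.card_union_of_disjoint hd4, Finset.card_union_of_disjoint hd3,
      Finset.card_union_of_disjoint hd2, Finset.card_union_of_disjoint hd1,
      hETdef, hEFdef, Finset.card_singleton, Finset.card_singleton, hcardV, hcardEA]
    have hco := horth.2
    omega
  exact isAcyclic_of_connected_card G hconn hcardE

end Expansion

/-- **Expansion property for the Danos–Regnier switching:** if `S` is a proof-structure
that has exactly two terminal nodes `C(A₁,…,Aₙ)` and `C*(~A₁,…,~Aₙ)`, where `A₁,…,Aₙ` are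
atoms, consisting of a `C`-link, a `C*`-link and, for each `k`, an atomic axiom link
joining `A_k` and `~A_k`, then `S` is correct in the sense of the Danos–Regnier
switching. -/
theorem expansion_property_DR {I : Type} {Csig : I → GenConn}
    (i : I) (a : Fin (Csig i).arity → ℕ)
    (S : ProofStructure I Csig) (hS : IsExpansionPS i a S.pre) :
    S.pre.DRProofNet := by
  classical
  obtain ⟨eN, eL, hlabP, hlabN, hlabT, hlabF, hax, hkT, hpT, hcT, hkF, hpF, hcF⟩ := hS
  intro sw
  obtain ⟨p, hpmem, hppart⟩ := sw.valid_conn _ i hkT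
  obtain ⟨q, hqmem, hqpart⟩ := sw.valid_dconn _ i hkF
  have horth : p.Orthogonal q := by
    have hq' : q ∈ orthCompl (Csig i).rules := by rw [(Csig i).orth]; exact hqmem
    exact hq' p hpmem
  have hselT : sw.selClass (eL.symm (.inr true)) ∈ partsToNat p := by
    rw [← hppart]; exact sw.sel_mem _ (Or.inr (Or.inr (Or.inl ⟨i, hkT⟩)))
  have hselF : sw.selClass (eL.symm (.inr false)) ∈ partsToNat q := by
    rw [← hqpart]; exact sw.sel_mem _ (Or.inr (Or.inr (Or.inr ⟨i, hkF⟩)))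
  have hselTne : (sw.selClass (eL.symm (.inr true))).Nonempty := partsToNat_nonempty hselT
  have hselFne : (sw.selClass (eL.symm (.inr false))).Nonempty := partsToNat_nonempty hselF
  have hjTmem := Finset.min'_mem _ hselTne
  have hjFmem := Finset.min'_mem _ hselFne
  have hjTlt : (sw.selClass (eL.symm (.inr true))).min' hselTne < (Csig i).arity :=
    partsToNat_bound hselT _ hjTmem
  have hjFlt : (sw.selClass (eL.symm (.inr false))).min' hselFne < (Csig i).arity :=
    partsToNat_bound hselF _ hjFmem
  have hkAx : ∀ k, S.pre.kind (eL.symm (.inl k)) = .ax := fun k => (hax k).1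
  have hpAx : ∀ k, S.pre.prem (eL.symm (.inl k)) = [] := fun k => (hax k).2.1
  have hcAx : ∀ k, S.pre.concl (eL.symm (.inl k)) = [XP eN k, XN eN k] := fun k => (hax k).2.2
  have hother : ∀ k, sw.part (eL.symm (.inl k)) = ∅ ∧ sw.selClass (eL.symm (.inl k)) = ∅ :=
    fun k => sw.valid_other _ (Or.inl (hkAx k))
  have hgetT : ∀ (j : ℕ) (x : S.pre.Node),
      ((S.pre.prem (eL.symm (.inr true)))[j]? = some x) ↔
        j < (Csig i).arity ∧ x = XPn eN j := by
    intro j x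
    rw [hpT, List.getElem?_ofFn]
    split
    next h =>
      simp only [Option.some.injEq]
      constructor
      · rintro rfl
        exact ⟨h, (XPn_lt eN h).symm⟩
      · rintro ⟨h', rfl⟩
        rw [XPn_lt eN h]
    next h =>
      constructor
      · intro hx
        exact absurd hx (by simp)
      · rintro ⟨h', _⟩
        exact absurd h' h
  have hgetF : ∀ (j : ℕ) (x : S.pre.Node),
      ((S.pre.prem (eL.symm (.inr false)))[j]? = some x) ↔
        j < (Csig i).arity ∧ x = XNn eN j := by
    intro j x
    rw [hpF, List.getElem?_ofFn]
    split
    next h =>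
      simp only [Option.some.injEq]
      constructor
      · rintro rfl
        exact ⟨h, (XNn_lt eN h).symm⟩
      · rintro ⟨h', rfl⟩
        rw [XNn_lt eN h]
    next h =>
      constructor
      · intro hx
        exact absurd hx (by simp)
      · rintro ⟨h', _⟩
        exact absurd h' h
  have hAdjR : ∀ a b, (S.pre.drGraph sw).Adj a b ↔
      (ExpRel eN p q ((sw.selClass (eL.symm (.inr true))).min' hselTne)
          ((sw.selClass (eL.symm (.inr false))).min' hselFne) a b ∨
       ExpRel eN p q ((sw.selClass (eL.symm (.inr true))).min' hselTne)
          ((sw.selClass (eL.symm (.inr false))).min' hselFne) b a) := by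
    have hrel : ∀ a b,
        ((∃ l, S.pre.kind l = .ax ∧ S.pre.concl l = [a, b]) ∨
         (∃ l, S.pre.kind l = .cut ∧ S.pre.prem l = [a, b]) ∨
         (∃ l, ∃ c ∈ sw.part l, ∃ j ∈ c, ∃ k ∈ c, j < k ∧ (∀ x ∈ c, ¬ (j < x ∧ x < k)) ∧
           (S.pre.prem l)[j]? = some a ∧ (S.pre.prem l)[k]? = some b) ∨
         (∃ l j, (∃ h : (sw.selClass l).Nonempty, j = (sw.selClass l).min' h) ∧
           (S.pre.prem l)[j]? = some a ∧ b ∈ S.pre.concl l)) →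
        ExpRel eN p q ((sw.selClass (eL.symm (.inr true))).min' hselTne)
          ((sw.selClass (eL.symm (.inr false))).min' hselFne) a b := by
      intro a b h
      rcases h with ⟨l, h1, h2⟩ | ⟨l, h1, h2⟩ |
        ⟨l, c, hc, j, hj, k, hk, hjk, hbet, hga, hgb⟩ | ⟨l, j, ⟨hne', hjmin⟩, hga, hb⟩
      · obtain ⟨l', rfl⟩ : ∃ l', l = eL.symm l' := ⟨eL l, (eL.symm_apply_apply l).symm⟩
        rcases l' with k' | b'
        · have h3 := (hcAx k').symm.trans h2
          simp only [List.cons.injEq, and_true] at h3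
          exact Or.inl ⟨k', h3.1.symm, h3.2.symm⟩
        · cases b'
          · rw [hkF] at h1; simp at h1
          · rw [hkT] at h1; simp at h1
      · obtain ⟨l', rfl⟩ : ∃ l', l = eL.symm l' := ⟨eL l, (eL.symm_apply_apply l).symm⟩
        rcases l' with k' | b'
        · rw [hkAx k'] at h1; simp at h1
        · cases b'
          · rw [hkF] at h1; simp at h1
          · rw [hkT] at h1; simp at h1
      · obtain ⟨l', rfl⟩ : ∃ l', l = eL.symm l' := ⟨eL l, (eL.symm_apply_apply l).symm⟩
        rcases l' with k' | b'
        · rw [(hother k').1] at hc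
          simp at hc
        · cases b'
          · rw [hqpart] at hc
            rw [hgetF] at hga hgb
            obtain ⟨hjlt, rfl⟩ := hga
            obtain ⟨hklt, rfl⟩ := hgb
            exact Or.inr (Or.inr (Or.inl ⟨c, hc, j, k, ⟨hj, hk, hjk, hbet⟩, rfl, rfl⟩))
          · rw [hppart] at hc
            rw [hgetT] at hga hgb
            obtain ⟨hjlt, rfl⟩ := hga
            obtain ⟨hklt, rfl⟩ := hgb
            exact Or.inr (Or.inl ⟨c, hc, j, k, ⟨hj, hk, hjk, hbet⟩, rfl, rfl⟩)
      · obtain ⟨l', rfl⟩ : ∃ l', l = eL.symm l' := ⟨eL l, (eL.symm_apply_apply l).symm⟩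
        rcases l' with k' | b'
        · rw [(hother k').2] at hne'
          exact absurd hne' (by simp)
        · cases b'
          · rw [hcF, List.mem_singleton] at hb
            subst hb
            rw [hgetF] at hga
            obtain ⟨hjlt, rfl⟩ := hga
            have hj' : j = (sw.selClass (eL.symm (.inr false))).min' hselFne := hjmin
            subst hj'
            exact Or.inr (Or.inr (Or.inr (Or.inr ⟨rfl, rfl⟩)))
          · rw [hcT, List.mem_singleton] at hb
            subst hb
            rw [hgetT] at hga
            obtain ⟨hjlt, rfl⟩ := hga
            have hj' : j = (sw.selClass (eL.symm (.inr true))).min' hselTne := hjmin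
            subst hj'
            exact Or.inr (Or.inr (Or.inr (Or.inl ⟨rfl, rfl⟩)))
    have hner : ∀ a b,
        ExpRel eN p q ((sw.selClass (eL.symm (.inr true))).min' hselTne)
          ((sw.selClass (eL.symm (.inr false))).min' hselFne) a b →
        ((∃ l, S.pre.kind l = .ax ∧ S.pre.concl l = [a, b]) ∨
         (∃ l, S.pre.kind l = .cut ∧ S.pre.prem l = [a, b]) ∨
         (∃ l, ∃ c ∈ sw.part l, ∃ j ∈ c, ∃ k ∈ c, j < k ∧ (∀ x ∈ c, ¬ (j < x ∧ x < k)) ∧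
           (S.pre.prem l)[j]? = some a ∧ (S.pre.prem l)[k]? = some b) ∨
         (∃ l j, (∃ h : (sw.selClass l).Nonempty, j = (sw.selClass l).min' h) ∧
           (S.pre.prem l)[j]? = some a ∧ b ∈ S.pre.concl l)) := by
      intro a b h
      rcases h with ⟨k, rfl, rfl⟩ | ⟨c, hc, j, k, hck, rfl, rfl⟩ |
        ⟨c, hc, j, k, hck, rfl, rfl⟩ | ⟨rfl, rfl⟩ | ⟨rfl, rfl⟩
      · exact Or.inl ⟨eL.symm (.inl k), hkAx k, hcAx k⟩
      · refine Or.inr (Or.inr (Or.inl ⟨eL.symm (.inr true), c, ?_, j, hck.1, k, hck.2.1,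
          hck.2.2.1, hck.2.2.2, ?_, ?_⟩))
        · rw [hppart]; exact hc
        · rw [hgetT]; exact ⟨partsToNat_bound hc j hck.1, rfl⟩
        · rw [hgetT]; exact ⟨partsToNat_bound hc k hck.2.1, rfl⟩
      · refine Or.inr (Or.inr (Or.inl ⟨eL.symm (.inr false), c, ?_, j, hck.1, k, hck.2.1,
          hck.2.2.1, hck.2.2.2, ?_, ?_⟩))
        · rw [hqpart]; exact hc
        · rw [hgetF]; exact ⟨partsToNat_bound hc j hck.1, rfl⟩
        · rw [hgetF]; exact ⟨partsToNat_bound hc k hck.2.1, rfl⟩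
      · refine Or.inr (Or.inr (Or.inr ⟨eL.symm (.inr true), _, ⟨hselTne, rfl⟩, ?_, ?_⟩))
        · rw [hgetT]; exact ⟨hjTlt, rfl⟩
        · rw [hcT]; exact List.mem_singleton_self _
      · refine Or.inr (Or.inr (Or.inr ⟨eL.symm (.inr false), _, ⟨hselFne, rfl⟩, ?_, ?_⟩))
        · rw [hgetF]; exact ⟨hjFlt, rfl⟩
        · rw [hcF]; exact List.mem_singleton_self _
    have hRne : ∀ a b,
        ExpRel eN p q ((sw.selClass (eL.symm (.inr true))).min' hselTne)
          ((sw.selClass (eL.symm (.inr false))).min' hselFne) a b → a ≠ b := by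
      intro a b h
      rcases h with ⟨k, rfl, rfl⟩ | ⟨c, hc, j, k, hck, rfl, rfl⟩ |
        ⟨c, hc, j, k, hck, rfl, rfl⟩ | ⟨rfl, rfl⟩ | ⟨rfl, rfl⟩
      · simp [XP, XN]
      · have hj' := partsToNat_bound hc j hck.1
        have hk' := partsToNat_bound hc k hck.2.1
        rw [XPn_lt eN hj', XPn_lt eN hk']
        intro heq
        simp only [XP, EmbeddingLike.apply_eq_iff_eq, Sum.inl.injEq, Fin.mk.injEq] at heq
        have := hck.2.2.1
        omega
      · have hj' := partsToNat_bound hc j hck.1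
        have hk' := partsToNat_bound hc k hck.2.1
        rw [XNn_lt eN hj', XNn_lt eN hk']
        intro heq
        simp only [XN, EmbeddingLike.apply_eq_iff_eq, Sum.inl.injEq, Sum.inr.injEq,
          Fin.mk.injEq] at heq
        have := hck.2.2.1
        omega
      · rw [XPn_lt eN hjTlt]
        simp [XP, XT]
      · rw [XNn_lt eN hjFlt]
        simp [XN, XF]
    intro a b
    show (SimpleGraph.fromRel _).Adj a b ↔ _
    rw [SimpleGraph.fromRel_adj]
    constructor
    · rintro ⟨hne, h | h⟩
      · exact Or.inl (hrel a b h)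
      · exact Or.inr (hrel b a h)
    · rintro (h | h)
      · exact ⟨hRne a b h, Or.inl (hner a b h)⟩
      · exact ⟨(hRne b a h).symm, Or.inr (hner b a h)⟩
  exact expansion_correct eN p q horth _ _ ⟨_, hselT, hjTmem⟩ ⟨_, hselF, hjFmem⟩
    (S.pre.drGraph sw) hAdjR
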